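/- Let (η_t), (r_t) be sequences in ℝ^m with r_{-1} = η_{-1} = r_0 and suppose ‖r_t - η_{t-1}‖ ≤ κ ‖r_{t-1} - η_{t-1}‖ for all t ≥ 0 with κ ∈ [0,1). Then Σ_{t=0}^T ‖r_t - η_{t-1}‖ ≤ (κ/(1-κ)) Σ_{t=0}^{T-1} ‖η_t - η_{t-1}‖. -/
import Mathlib


/-- If `r_{-1} = η_{-1} = r_0` and `‖r_t - η_{t-1}‖ ≤ κ ‖r_{t-1} - η_{t-1}‖` for all
`t ≥ 0` with `κ ∈ [0,1)`, then
`Σ_{t=0}^T ‖r_t - η_{t-1}‖ ≤ (κ/(1-κ)) Σ_{t=0}^{T-1} ‖η_t - η_{t-1}‖`. -/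
theorem stmt7 {m : ℕ} (η r : ℤ → EuclideanSpace ℝ (Fin m))
    (κ : ℝ) (hκ : κ ∈ Set.Ico (0 : ℝ) 1)
    (hinit : r (-1) = η (-1) ∧ η (-1) = r 0)
    (hcontr : ∀ t : ℕ, ‖r t - η (t - 1)‖ ≤ κ * ‖r (t - 1) - η (t - 1)‖)
    (T : ℕ) :
    ∑ t ∈ Finset.range (T + 1), ‖r t - η ((t : ℤ) - 1)‖
      ≤ κ / (1 - κ) * ∑ t ∈ Finset.range T, ‖η t - η ((t : ℤ) - 1)‖ := by
  obtain ⟨hκ0, hκ1⟩ := hκ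
  set a : ℕ → ℝ := fun t => ‖r t - η ((t : ℤ) - 1)‖ with ha
  set b : ℕ → ℝ := fun t => ‖η t - η ((t : ℤ) - 1)‖ with hb
  have ha0 : a 0 = 0 := by
    simp only [ha, Nat.cast_zero, zero_sub, ← hinit.2]
    simp
  have hann : ∀ t, 0 ≤ a t := fun t => norm_nonneg _
  have hbnn : ∀ t, 0 ≤ b t := fun t => norm_nonneg _
  have key : ∀ s : ℕ, a (s + 1) ≤ κ * (a s + b s) := by
    intro s
    have h := hcontr (s + 1)
    have e : ((s + 1 : ℕ) : ℤ) - 1 = (s : ℤ) := by push_cast; ring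
    rw [e] at h
    have h2 : ‖r (s : ℤ) - η s‖ ≤ a s + b s := by
      have hd : r (s : ℤ) - η s = (r s - η ((s : ℤ) - 1)) - (η s - η ((s : ℤ) - 1)) := by
        abel
      rw [hd]
      calc ‖(r s - η ((s : ℤ) - 1)) - (η s - η ((s : ℤ) - 1))‖
          ≤ ‖r s - η ((s : ℤ) - 1)‖ + ‖η s - η ((s : ℤ) - 1)‖ := norm_sub_le _ _
        _ = a s + b s := rfl
    have e2 : a (s + 1) = ‖r ((s + 1 : ℕ) : ℤ) - η s‖ := by
      simp only [ha]; rw [e]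
    rw [e2]
    exact h.trans (mul_le_mul_of_nonneg_left h2 hκ0)
  set S := ∑ t ∈ Finset.range (T + 1), a t with hS
  set B := ∑ t ∈ Finset.range T, b t with hB
  have h1 : S = ∑ t ∈ Finset.range T, a (t + 1) := by
    rw [hS, Finset.sum_range_succ', ha0, add_zero]
  have h2 : S ≤ κ * (S + B) := by
    have hST : ∑ t ∈ Finset.range T, a t ≤ S := by
      rw [hS, Finset.sum_range_succ]
      exact le_add_of_nonneg_right (hann T)
    calc S = ∑ t ∈ Finset.range T, a (t + 1) := h1
      _ ≤ ∑ t ∈ Finset.range T, κ * (a t + b t) :=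
          Finset.sum_le_sum fun t _ => key t
      _ = κ * (∑ t ∈ Finset.range T, a t + B) := by
          rw [hB, ← Finset.sum_add_distrib, Finset.mul_sum]
      _ ≤ κ * (S + B) := by
          have hBnn : 0 ≤ B := Finset.sum_nonneg fun t _ => hbnn t
          nlinarith
  have h3 : 0 < 1 - κ := by linarith
  rw [div_mul_eq_mul_div, le_div_iff₀ h3]
  nlinarith
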